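/- Let M = X + Y be a symmetric 5-diagonally-dominant matrix where X is diagonal with positive diagonal and Y is a Laplacian, and let Z = Σ_{i=0}^{l} X^{-1} (-Y X^{-1})^i for an odd integer l ≥ log₂(3/ε), where 0 < ε < 1. Then M ⪯ Z^{-1} ⪯ M + ε Y. -/

import Mathlib

open Matrix BigOperators

private lemma dd_posSemidef {n : Type*} [Fintype n] [DecidableEq n] (Z : Matrix n n ℝ)
    (hsym : Zᵀ = Z) (hdd : ∀ i, ∑ j ∈ Finset.univ.erase i, |Z i j| ≤ Z i i) :
    Z.PosSemidef := by
  have hsym' : ∀ i j, Z j i = Z i j := fun i j => by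
    conv_lhs => rw [← hsym, transpose_apply]
  refine posSemidef_iff_dotProduct_mulVec.mpr ⟨?_, ?_⟩
  · ext i j; simp [conjTranspose_apply, hsym' i j]
  intro x
  have hx : star x = x := by ext i; simp
  rw [hx]
  set f : n → n → ℝ := fun i j => if i = j then 0 else Z i j with hf
  have hfsym : ∀ i j, f j i = f i j := by
    intro i j
    by_cases h : i = j
    · simp [hf, h]
    · simp [hf, h, Ne.symm h, hsym' i j]
  have hrow : x ⬝ᵥ Z *ᵥ x = ∑ i, (Z i i * x i ^ 2 + ∑ j, f i j * (x i * x j)) := by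
    simp only [dotProduct, mulVec, dotProduct, Finset.mul_sum]
    refine Finset.sum_congr rfl fun i _ => ?_
    have : ∀ j ∈ Finset.univ, x i * (Z i j * x j)
        = (if j = i then Z i i * x i ^ 2 else 0) + f i j * (x i * x j) := by
      intro j _
      by_cases h : j = i
      · subst h; simp [hf]; ring
      · simp [hf, Ne.symm h, h]; ring
    rw [Finset.sum_congr rfl this, Finset.sum_add_distrib, Finset.sum_ite_eq']
    simp
  rw [hrow]
  have hfe : ∀ i, ∑ j, |f i j| ≤ Z i i := by
    intro i
    refine le_trans (le_of_eq ?_) (hdd i)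
    rw [← Finset.add_sum_erase _ (fun j => |f i j|) (Finset.mem_univ i)]
    have h0 : |f i i| = 0 := by simp [hf]
    rw [h0, zero_add]
    exact Finset.sum_congr rfl fun j hj => by
      simp [hf, Ne.symm (Finset.ne_of_mem_erase hj)]
  have hstep : ∀ i, (∑ j, (|f i j| * x i ^ 2 + f i j * (x i * x j)))
      ≤ Z i i * x i ^ 2 + ∑ j, f i j * (x i * x j) := by
    intro i
    rw [Finset.sum_add_distrib, ← Finset.sum_mul]
    have := mul_le_mul_of_nonneg_right (hfe i) (sq_nonneg (x i))
    linarith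
  refine le_trans ?_ (Finset.sum_le_sum fun i _ => hstep i)
  have hswap : ∑ i, ∑ j, |f i j| * x i ^ 2 = ∑ i, ∑ j, |f i j| * x j ^ 2 := by
    rw [Finset.sum_comm]
    exact Finset.sum_congr rfl fun i _ => Finset.sum_congr rfl fun j _ => by rw [hfsym]
  have hpos : 0 ≤ ∑ i, ∑ j, (|f i j| * x i ^ 2 + (|f i j| * x j ^ 2 + 2 * (f i j * (x i * x j)))) := by
    refine Finset.sum_nonneg fun i _ => Finset.sum_nonneg fun j _ => ?_
    rcases le_or_gt 0 (f i j) with h | h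
    · have he : |f i j| * x i ^ 2 + (|f i j| * x j ^ 2 + 2 * (f i j * (x i * x j)))
          = f i j * (x i + x j) ^ 2 := by rw [abs_of_nonneg h]; ring
      rw [he]; exact mul_nonneg h (sq_nonneg _)
    · have he : |f i j| * x i ^ 2 + (|f i j| * x j ^ 2 + 2 * (f i j * (x i * x j)))
          = (-(f i j)) * (x i - x j) ^ 2 := by rw [abs_of_neg h]; ring
      rw [he]; exact mul_nonneg (by linarith) (sq_nonneg _)
  simp only [Finset.sum_add_distrib, ← Finset.mul_sum] at hpos ⊢
  linarith [hswap]

/-- `Y` is a Laplacian matrix: symmetric, nonpositive off-diagonal entries, zero row sums. -/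
def IsLapMatrix {n : Type*} [Fintype n] (Y : Matrix n n ℝ) : Prop :=
  Yᵀ = Y ∧ (∀ i j, i ≠ j → Y i j ≤ 0) ∧ (∀ i, ∑ j, Y i j = 0)

set_option maxHeartbeats 1000000 in
theorem stmt8 {n : Type*} [Fintype n] [DecidableEq n]
    (X Y M : Matrix n n ℝ) (ε : ℝ) (l : ℕ)
    (hM : M = X + Y) (hX : X.IsDiag) (hXpos : ∀ i, 0 < X i i) (hY : IsLapMatrix Y)
    (h5dd : ∀ i, 5 * ∑ j ∈ Finset.univ.erase i, |M i j| ≤ M i i)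
    (hε : 0 < ε) (hε1 : ε < 1) (hl : Odd l) (hl2 : Real.logb 2 (3 / ε) ≤ l) :
    ((∑ i ∈ Finset.range (l + 1), X⁻¹ * (-(Y * X⁻¹)) ^ i)⁻¹ - M).PosSemidef ∧
    (M + ε • Y - (∑ i ∈ Finset.range (l + 1), X⁻¹ * (-(Y * X⁻¹)) ^ i)⁻¹).PosSemidef := by
  obtain ⟨hYsym, hYoff, hYrow⟩ := hY
  have hYsym' : ∀ i j, Y j i = Y i j := fun i j => by
    conv_lhs => rw [← hYsym, transpose_apply]
  have hXoff : ∀ i j, i ≠ j → X i j = 0 := fun i j h => hX h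
  -- diagonal of Y equals sum of abs of off-diagonal
  have hYdiag : ∀ i, Y i i = ∑ j ∈ Finset.univ.erase i, |Y i j| := by
    intro i
    have h := hYrow i
    rw [← Finset.add_sum_erase _ _ (Finset.mem_univ i)] at h
    have h2 : ∑ j ∈ Finset.univ.erase i, |Y i j|
        = ∑ j ∈ Finset.univ.erase i, -(Y i j) :=
      Finset.sum_congr rfl fun j hj =>
        abs_of_nonpos (hYoff i j (Ne.symm (Finset.ne_of_mem_erase hj)))
    rw [h2, Finset.sum_neg_distrib]
    linarith
  have hMoff : ∀ i j, i ≠ j → M i j = Y i j := by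
    intro i j h; rw [hM, Matrix.add_apply, hXoff i j h, zero_add]
  have hMdiag : ∀ i, M i i = X i i + Y i i := by
    intro i; rw [hM, Matrix.add_apply]
  have hXY : ∀ i, 4 * Y i i ≤ X i i := by
    intro i
    have h := h5dd i
    have h2 : ∑ j ∈ Finset.univ.erase i, |M i j| = Y i i := by
      rw [hYdiag i]
      exact Finset.sum_congr rfl fun j hj => by
        rw [hMoff i j (Ne.symm (Finset.ne_of_mem_erase hj))]
    rw [h2, hMdiag i] at h
    linarith
  have hYii : ∀ i, 0 ≤ Y i i := fun i => by
    rw [hYdiag i]; exact Finset.sum_nonneg fun j _ => abs_nonneg _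
  have hYpsd : Y.PosSemidef := dd_posSemidef Y hYsym fun i => le_of_eq (hYdiag i).symm
  have hXm2Ypsd : (X - (2:ℝ) • Y).PosSemidef := by
    apply dd_posSemidef
    · ext i j
      by_cases h : i = j
      · subst h; rfl
      · simp [transpose_apply, Matrix.sub_apply, Matrix.smul_apply, hXoff i j h,
          hXoff j i (Ne.symm h), hYsym' i j]
    · intro i
      have h2 : ∑ j ∈ Finset.univ.erase i, |(X - (2:ℝ) • Y) i j|
          = 2 * ∑ j ∈ Finset.univ.erase i, |Y i j| := by
        rw [Finset.mul_sum]
        refine Finset.sum_congr rfl fun j hj => ?_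
        have hne : i ≠ j := Ne.symm (Finset.ne_of_mem_erase hj)
        rw [Matrix.sub_apply, Matrix.smul_apply, hXoff i j hne, smul_eq_mul, zero_sub, abs_neg,
          abs_mul, abs_of_nonneg (by norm_num : (0:ℝ) ≤ 2)]
      rw [h2, ← hYdiag i]
      have := hXY i
      simp only [Matrix.sub_apply, Matrix.smul_apply, smul_eq_mul]
      linarith
  -- square root of X
  set s : n → ℝ := fun i => Real.sqrt (X i i) with hs
  have hspos : ∀ i, 0 < s i := fun i => Real.sqrt_pos.mpr (hXpos i)
  set W : Matrix n n ℝ := diagonal s with hWdef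
  set Wi : Matrix n n ℝ := diagonal (fun i => (s i)⁻¹) with hWidef
  have hWWi : W * Wi = 1 := by
    rw [hWdef, hWidef, diagonal_mul_diagonal, ← diagonal_one]
    have : (fun i => s i * (s i)⁻¹) = fun _ : n => (1:ℝ) :=
      funext fun i => mul_inv_cancel₀ (ne_of_gt (hspos i))
    rw [this]
  have hWiW : Wi * W = 1 := by
    rw [hWidef, hWdef, diagonal_mul_diagonal, ← diagonal_one]
    have : (fun i => (s i)⁻¹ * s i) = fun _ : n => (1:ℝ) :=
      funext fun i => inv_mul_cancel₀ (ne_of_gt (hspos i))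
    rw [this]
  have hWW : W * W = X := by
    rw [hWdef, diagonal_mul_diagonal, ← hX.diagonal_diag]
    have : (fun i => s i * s i) = X.diag :=
      funext fun i => Real.mul_self_sqrt (le_of_lt (hXpos i))
    rw [this]
  have hXinv : X⁻¹ = Wi * Wi := by
    apply inv_eq_right_inv
    rw [← hWW, mul_assoc, ← mul_assoc W Wi Wi, hWWi, one_mul, hWWi]
  have hWsym : Wᴴ = W := by
    rw [hWdef, diagonal_conjTranspose]
    congr 1
  have hWisym : Wiᴴ = Wi := by
    rw [hWidef, diagonal_conjTranspose]
    congr 1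
  -- normalized matrix A
  set A : Matrix n n ℝ := Wi * Y * Wi with hAdef
  have hApsd : A.PosSemidef := by
    have := hYpsd.mul_mul_conjTranspose_same Wi
    rwa [hWisym] at this
  have hAherm : A.IsHermitian := hApsd.1
  have hCeq : Wi * (X - (2:ℝ) • Y) * Wi = 1 - (2:ℝ) • A := by
    rw [Matrix.mul_sub, Matrix.sub_mul, mul_smul_comm, smul_mul_assoc, hAdef]
    congr 1
    rw [← hWW, mul_assoc, mul_assoc W W Wi, hWWi, mul_one, hWiW]
  have hCpsd : (1 - (2:ℝ) • A).PosSemidef := by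
    rw [← hCeq]
    have := hXm2Ypsd.mul_mul_conjTranspose_same Wi
    rwa [hWisym] at this
  set a : n → ℝ := hAherm.eigenvalues with ha
  have ha0 : ∀ i, 0 ≤ a i := fun i => hApsd.eigenvalues_nonneg i
  have ha2 : ∀ i, a i ≤ 1 / 2 := by
    intro i
    set v : n → ℝ := ⇑(hAherm.eigenvectorBasis i) with hv
    have hmv : A *ᵥ v = a i • v := hAherm.mulVec_eigenvectorBasis i
    have hvne : v ≠ 0 := by
      intro h
      exact hAherm.eigenvectorBasis.orthonormal.ne_zero i (by ext j; exact congrFun h j)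
    have hdp : 0 < v ⬝ᵥ v := by
      refine lt_of_le_of_ne (Finset.sum_nonneg fun j _ => mul_self_nonneg _) ?_
      intro h
      exact hvne (dotProduct_self_eq_zero.mp h.symm)
    have h := hCpsd.dotProduct_mulVec_nonneg v
    have hsv : star v = v := by ext j; simp
    have hmv2 : (1 - (2:ℝ) • A) *ᵥ v = (1 - 2 * a i) • v := by
      rw [sub_mulVec, one_mulVec, smul_mulVec, hmv, smul_smul, sub_smul, one_smul]
    rw [hsv, hmv2, dotProduct_smul, smul_eq_mul] at h
    nlinarith
  -- spectral theorem
  set U : Matrix n n ℝ := (hAherm.eigenvectorUnitary : Matrix n n ℝ) with hU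
  have hUUh : U * Uᴴ = 1 := by
    rw [hU, ← Matrix.star_eq_conjTranspose]
    exact Matrix.mem_unitaryGroup_iff.mp hAherm.eigenvectorUnitary.2
  have hUhU : Uᴴ * U = 1 := by
    rw [hU, ← Matrix.star_eq_conjTranspose]
    exact Matrix.mem_unitaryGroup_iff'.mp hAherm.eigenvectorUnitary.2
  have hspec : A = U * diagonal a * Uᴴ := by
    have h := hAherm.spectral_theorem
    rw [Unitary.conjStarAlgAut_apply] at h
    rw [ha, hU, ← Matrix.star_eq_conjTranspose]
    simpa [RCLike.ofReal_real_eq_id] using h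
  -- scalar facts
  have hl1 : 1 ≤ l := hl.pos
  have hε3 : 3 * ((1:ℝ) / 2) ^ l ≤ ε := by
    have hp2 : (0:ℝ) < 2 ^ l := by positivity
    have h2l : (3:ℝ) / ε ≤ 2 ^ l := by
      have := (Real.logb_le_iff_le_rpow (by norm_num : (1:ℝ) < 2)
        (by positivity : (0:ℝ) < 3 / ε)).mp hl2
      rwa [Real.rpow_natCast] at this
    have h3 : (3:ℝ) ≤ 2 ^ l * ε := (div_le_iff₀ hε).mp h2l
    have he : ((1:ℝ) / 2) ^ l = (2 ^ l)⁻¹ := by rw [one_div, inv_pow]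
    rw [he, ← div_eq_mul_inv, div_le_iff₀ hp2]
    nlinarith
  set p : n → ℝ := fun i => ∑ k ∈ Finset.range (l + 1), (-a i) ^ k with hp
  have hgeom : ∀ i, p i * (1 + a i) = 1 - a i ^ (l + 1) := by
    intro i
    have hne : (-a i) ≠ 1 := by nlinarith [ha0 i]
    have hne2 : (-a i) - 1 ≠ 0 := by nlinarith [ha0 i]
    have hg := geom_sum_eq hne (l + 1)
    have heven : (-a i) ^ (l + 1) = a i ^ (l + 1) := (hl.add_one).neg_pow (a i)
    rw [hp]
    simp only []
    rw [hg, heven]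
    field_simp
    ring
  have hpow1 : ∀ i, a i ^ (l + 1) < 1 := fun i =>
    pow_lt_one₀ (ha0 i) (by linarith [ha2 i]) (Nat.succ_ne_zero l)
  have hppos : ∀ i, 0 < p i := by
    intro i
    nlinarith [hgeom i, hpow1 i, ha0 i]
  -- diagonalize powers
  have hnegA : -A = U * diagonal (fun i => -a i) * Uᴴ := by
    rw [hspec]
    have : diagonal (fun i => -a i) = -diagonal a := by
      ext i j; by_cases h : i = j
      · subst h; simp [diagonal_apply]
      · simp [diagonal_apply, h]
    rw [this]
    simp only [Matrix.neg_mul, Matrix.mul_neg]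
  have mulconj : ∀ d e : n → ℝ, (U * diagonal d * Uᴴ) * (U * diagonal e * Uᴴ)
      = U * diagonal (fun i => d i * e i) * Uᴴ := by
    intro d e
    rw [← diagonal_mul_diagonal]
    simp only [mul_assoc]
    rw [← mul_assoc Uᴴ U, hUhU, one_mul]
  have hone : (1 : Matrix n n ℝ) = U * diagonal (fun _ : n => (1:ℝ)) * Uᴴ := by
    rw [diagonal_one, mul_one, hUUh]
  have hpowk : ∀ k : ℕ, (-A) ^ k = U * diagonal (fun i => (-a i) ^ k) * Uᴴ := by
    intro k
    induction k with
    | zero => simp only [pow_zero]; exact hone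
    | succ k ih =>
      rw [pow_succ, ih, hnegA, mulconj]
      simp only [← pow_succ]
  have hdsum : ∑ k ∈ Finset.range (l + 1), diagonal (fun i => (-a i) ^ k)
      = diagonal p := by
    ext i j
    by_cases h : i = j
    · subst h; simp [Matrix.sum_apply, diagonal_apply, hp]
    · simp [Matrix.sum_apply, diagonal_apply, h]
  have hSdiag : ∑ k ∈ Finset.range (l + 1), (-A) ^ k = U * diagonal p * Uᴴ := by
    calc ∑ k ∈ Finset.range (l + 1), (-A) ^ k
        = ∑ k ∈ Finset.range (l + 1), U * diagonal (fun i => (-a i) ^ k) * Uᴴ :=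
          Finset.sum_congr rfl fun k _ => hpowk k
      _ = U * (∑ k ∈ Finset.range (l + 1), diagonal (fun i => (-a i) ^ k)) * Uᴴ := by
          rw [← Finset.sum_mul, ← Finset.mul_sum]
      _ = U * diagonal p * Uᴴ := by rw [hdsum]
  have hterm : ∀ k : ℕ, X⁻¹ * (-(Y * X⁻¹)) ^ k = Wi * ((-A) ^ k * Wi) := by
    intro k
    induction k with
    | zero => rw [pow_zero, pow_zero, one_mul, mul_one, hXinv]
    | succ k ih =>
      rw [pow_succ, ← mul_assoc, ih, pow_succ, hXinv, hAdef]
      simp only [Matrix.mul_neg, Matrix.neg_mul, mul_assoc]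
  have hZeq : ∑ k ∈ Finset.range (l + 1), X⁻¹ * (-(Y * X⁻¹)) ^ k
      = Wi * ((U * diagonal p * Uᴴ) * Wi) := by
    calc ∑ k ∈ Finset.range (l + 1), X⁻¹ * (-(Y * X⁻¹)) ^ k
        = ∑ k ∈ Finset.range (l + 1), Wi * ((-A) ^ k * Wi) :=
          Finset.sum_congr rfl fun k _ => hterm k
      _ = Wi * ((∑ k ∈ Finset.range (l + 1), (-A) ^ k) * Wi) := by
          rw [← Finset.mul_sum, ← Finset.sum_mul]
      _ = _ := by rw [hSdiag]
  set g : n → ℝ := fun i => (p i)⁻¹ with hgdef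
  have hdg : diagonal p * diagonal g = 1 := by
    rw [diagonal_mul_diagonal, ← diagonal_one]
    have : (fun i => p i * g i) = fun _ : n => (1:ℝ) :=
      funext fun i => mul_inv_cancel₀ (ne_of_gt (hppos i))
    rw [this]
  have hZinv : (∑ k ∈ Finset.range (l + 1), X⁻¹ * (-(Y * X⁻¹)) ^ k)⁻¹
      = W * (U * diagonal g * Uᴴ) * W := by
    apply inv_eq_right_inv
    rw [hZeq]
    simp only [mul_assoc]
    rw [← mul_assoc Wi W, hWiW, one_mul, ← mul_assoc Uᴴ U, hUhU, one_mul,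
      ← mul_assoc (diagonal p) (diagonal g), hdg, one_mul, ← mul_assoc U Uᴴ, hUUh,
      one_mul, hWiW]
  have hYW : Y = W * A * W := by
    rw [hAdef]
    simp only [mul_assoc]
    rw [hWiW, mul_one, ← mul_assoc, hWWi, one_mul]
  have hMW : M = W * (U * diagonal (fun i => 1 + a i) * Uᴴ) * W := by
    have hd : diagonal (fun i => 1 + a i) = diagonal (fun _ : n => (1:ℝ)) + diagonal a := by
      ext i j; by_cases h : i = j
      · subst h; simp [diagonal_apply]
      · simp [diagonal_apply, h]
    rw [hM, hd, Matrix.mul_add, Matrix.add_mul, Matrix.mul_add, Matrix.add_mul,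
      ← hone, ← hspec, mul_one, hWW, ← hYW]
  have hεYW : ε • Y = W * (U * diagonal (fun i => ε * a i) * Uᴴ) * W := by
    rw [hYW, hspec]
    have hd : diagonal (fun i => ε * a i) = ε • diagonal a := by
      ext i j; by_cases h : i = j
      · subst h; simp [diagonal_apply]
      · simp [diagonal_apply, h]
    rw [hd]
    simp only [Matrix.smul_mul, Matrix.mul_smul]
  have hconj : ∀ d : n → ℝ, (∀ i, 0 ≤ d i) → (W * (U * diagonal d * Uᴴ) * W).PosSemidef := by
    intro d hd
    have h1 : W * (U * diagonal d * Uᴴ) * W = (W * U) * diagonal d * (W * U)ᴴ := by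
      rw [conjTranspose_mul, hWsym]
      simp only [mul_assoc]
    rw [h1]
    exact (posSemidef_diagonal_iff.mpr hd).mul_mul_conjTranspose_same _
  have hsub : ∀ d e : n → ℝ, W * (U * diagonal d * Uᴴ) * W - W * (U * diagonal e * Uᴴ) * W
      = W * (U * diagonal (fun i => d i - e i) * Uᴴ) * W := by
    intro d e
    have hd : diagonal (fun i => d i - e i) = diagonal d - diagonal e := by
      ext i j; by_cases h : i = j
      · subst h; simp [diagonal_apply]
      · simp [diagonal_apply, h]
    rw [hd]
    simp only [Matrix.mul_sub, Matrix.sub_mul]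
  have hadd : ∀ d e : n → ℝ, W * (U * diagonal d * Uᴴ) * W + W * (U * diagonal e * Uᴴ) * W
      = W * (U * diagonal (fun i => d i + e i) * Uᴴ) * W := by
    intro d e
    have hd : diagonal (fun i => d i + e i) = diagonal d + diagonal e := by
      ext i j; by_cases h : i = j
      · subst h; simp [diagonal_apply]
      · simp [diagonal_apply, h]
    rw [hd]
    simp only [Matrix.mul_add, Matrix.add_mul]
  -- scalar inequalities
  have hin1 : ∀ i, 0 ≤ g i - (1 + a i) := by
    intro i
    have hp := hppos i
    have hgm := hgeom i
    rw [hgdef]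
    simp only []
    rw [sub_nonneg, inv_eq_one_div, le_div_iff₀ hp]
    nlinarith [pow_nonneg (ha0 i) (l + 1)]
  have hin2 : ∀ i, 0 ≤ 1 + a i + ε * a i - g i := by
    intro i
    have hp := hppos i
    have hgm := hgeom i
    have h0 := ha0 i
    have h2 := ha2 i
    have hal : a i ^ l ≤ ((1:ℝ) / 2) ^ l := pow_le_pow_left₀ h0 (by linarith) l
    have hcl : ((1:ℝ) / 2) ^ l ≤ 1 / 2 := by
      calc ((1:ℝ) / 2) ^ l ≤ ((1:ℝ) / 2) ^ 1 :=
            pow_le_pow_of_le_one (by norm_num) (by norm_num) hl1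
        _ = 1 / 2 := pow_one _
    have hsucc : a i ^ (l + 1) = a i ^ l * a i := pow_succ _ _
    have haal : a i ^ l * a i ≤ 1 / 4 := by
      have h1 : a i ^ l * a i ≤ ((1:ℝ) / 2) ^ l * (1 / 2) :=
        mul_le_mul hal h2 h0 (by positivity)
      nlinarith
    have haal0 : 0 ≤ a i ^ l * a i := mul_nonneg (pow_nonneg h0 l) h0
    have key2 : (1 + a i) * 1 ≤ (1 + a i + ε * a i) * (1 - a i ^ (l + 1)) := by
      rw [hsucc]
      have hεa : 3 * ((1:ℝ) / 2) ^ l * a i ≤ ε * a i :=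
        mul_le_mul_of_nonneg_right hε3 h0
      have hca : a i ^ l * a i ≤ ((1:ℝ) / 2) ^ l * a i :=
        mul_le_mul_of_nonneg_right hal h0
      nlinarith [mul_nonneg (mul_nonneg (by positivity : (0:ℝ) ≤ ((1:ℝ)/2)^l) h0) h0,
        mul_nonneg hε.le h0]
    rw [hgdef]
    simp only []
    rw [sub_nonneg, inv_eq_one_div, div_le_iff₀ hp]
    nlinarith [mul_pos hp (by linarith : (0:ℝ) < 1 + a i)]
  refine ⟨?_, ?_⟩
  · rw [hZinv, hMW, hsub]
    exact hconj _ hin1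
  · rw [hZinv, hMW, hεYW, hadd, hsub]
    exact hconj _ hin2
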